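/- If a Z-graded commutative ring A is quasi-standard (contains an invertible homogeneous element of positive degree), then A is good: for every homogeneous prime ideal p of A and every integer d, p_d = A_d holds if and only if p_{-d} = A_{-d}; equivalently, the map p ↦ p_0 from homogeneous primes of A to primes of A_0 is injective. -/

import Mathlib

open DirectSum

/-- In a `ℤ`-graded ring, a homogeneous unit of degree `e` has a (homogeneous)
partial inverse of degree `-e`. -/
lemma aux_inv {A : Type*} [CommRing A] (𝒜 : ℤ → AddSubgroup A) [GradedRing 𝒜]
    {e : ℤ} {a : A} (ha : a ∈ 𝒜 e) (hu : IsUnit a) :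
    ∃ b ∈ 𝒜 (-e), a * b = 1 := by
  obtain ⟨u, rfl⟩ := hu
  refine ⟨decompose 𝒜 (↑u⁻¹ : A) (-e), SetLike.coe_mem _, ?_⟩
  have h1 : ((u : A) * (↑u⁻¹ : A)) = 1 := u.mul_inv
  have := DirectSum.coe_decompose_mul_add_of_left_mem 𝒜 (b := (↑u⁻¹ : A)) (j := -e) ha
  rw [h1, add_neg_cancel] at this
  have h2 : (decompose 𝒜 (1 : A) 0 : A) = 1 :=
    DirectSum.decompose_of_mem_same 𝒜 SetLike.GradedOne.one_mem
  rw [h2] at this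
  exact this.symm

/-- Existence of a homogeneous unit in every degree that is a multiple of `e`. -/
lemma aux_unit {A : Type*} [CommRing A] (𝒜 : ℤ → AddSubgroup A) [GradedRing 𝒜]
    {e : ℤ} {a : A} (ha : a ∈ 𝒜 e) (hu : IsUnit a) (d : ℤ) :
    ∃ v ∈ 𝒜 (d * e), IsUnit v := by
  obtain ⟨b, hb, hab⟩ := aux_inv 𝒜 ha hu
  have hbu : IsUnit b := IsUnit.of_mul_eq_one (a := b) a (by rwa [mul_comm])
  rcases le_or_gt 0 d with hd | hd
  · refine ⟨a ^ d.toNat, ?_, hu.pow _⟩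
    have := SetLike.pow_mem_graded (A := 𝒜) d.toNat ha
    rwa [show (d.toNat • e : ℤ) = d * e by
      rw [nsmul_eq_mul]; congr 1; exact Int.toNat_of_nonneg hd] at this
  · refine ⟨b ^ (-d).toNat, ?_, hbu.pow _⟩
    have := SetLike.pow_mem_graded (A := 𝒜) (-d).toNat hb
    rwa [show ((-d).toNat • (-e) : ℤ) = d * e by
      rw [nsmul_eq_mul, Int.toNat_of_nonneg (by omega)]; ring] at this

/-- One direction of statement (1). -/
lemma aux_dir {A : Type*} [CommRing A] (𝒜 : ℤ → AddSubgroup A) [GradedRing 𝒜]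
    {e : ℤ} {a : A} (he : 0 < e) (ha : a ∈ 𝒜 e) (hu : IsUnit a)
    (p : Ideal A) (hp : p.IsPrime) (d : ℤ)
    (hd : ∀ a ∈ 𝒜 d, a ∈ p) : ∀ x ∈ 𝒜 (-d), x ∈ p := by
  intro x hx
  obtain ⟨v, hv, hvu⟩ := aux_unit 𝒜 ha hu (2 * d)
  set k : ℕ := 2 * e.toNat - 1 with hk
  have hke : (k : ℤ) = 2 * e - 1 := by
    simp only [hk]; omega
  have hxk : x ^ k ∈ 𝒜 ((k : ℤ) * (-d)) := by
    have := SetLike.pow_mem_graded (A := 𝒜) k hx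
    rwa [nsmul_eq_mul] at this
  have hmem : x ^ k * v ∈ 𝒜 d := by
    have := SetLike.mul_mem_graded hxk hv
    rwa [show (k : ℤ) * (-d) + 2 * d * e = d by rw [hke]; ring] at this
  have hpmem : x ^ k * v ∈ p := hd _ hmem
  obtain ⟨w, hw⟩ := hvu.exists_right_inv
  have hxkp : x ^ k ∈ p := by
    have : x ^ k * v * w ∈ p := Ideal.mul_mem_right _ _ hpmem
    rwa [mul_assoc, hw, mul_one] at this
  exact hp.mem_of_pow_mem k hxkp

/-- One direction of statement (2). -/
lemma aux_le {A : Type*} [CommRing A] (𝒜 : ℤ → AddSubgroup A) [GradedRing 𝒜]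
    {e : ℤ} {a : A} (he : 0 < e) (ha : a ∈ 𝒜 e) (hu : IsUnit a)
    (p q : Ideal A) (hp : p.IsPrime) (hq : q.IsPrime)
    (hph : p.IsHomogeneous 𝒜) (h0 : ∀ a ∈ 𝒜 0, a ∈ p → a ∈ q) : p ≤ q := by
  classical
  intro x hxp
  rw [← DirectSum.sum_support_decompose 𝒜 x]
  refine Ideal.sum_mem _ fun i _ => ?_
  -- each homogeneous component of x lies in p
  have hcomp : (decompose 𝒜 x i : A) ∈ p := hph i hxp
  set y : A := (decompose 𝒜 x i : A) with hy
  have hyi : y ∈ 𝒜 i := SetLike.coe_mem _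
  obtain ⟨v, hv, hvu⟩ := aux_unit 𝒜 ha hu (-i)
  set k : ℕ := e.toNat with hk
  have hke : (k : ℤ) = e := by simp only [hk]; omega
  have hyk : y ^ k ∈ 𝒜 ((k : ℤ) * i) := by
    have := SetLike.pow_mem_graded (A := 𝒜) k hyi
    rwa [nsmul_eq_mul] at this
  have hmem : y ^ k * v ∈ 𝒜 0 := by
    have := SetLike.mul_mem_graded hyk hv
    rwa [show (k : ℤ) * i + -i * e = 0 by rw [hke]; ring] at this
  have hq1 : y ^ k * v ∈ q := h0 _ hmem (Ideal.mul_mem_right _ _ (Ideal.pow_mem_of_mem p hcomp k (by omega)))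
  obtain ⟨w, hw⟩ := hvu.exists_right_inv
  have hykq : y ^ k ∈ q := by
    have : y ^ k * v * w ∈ q := Ideal.mul_mem_right _ _ hq1
    rwa [mul_assoc, hw, mul_one] at this
  exact hq.mem_of_pow_mem k hykq

/-- A quasi-standard `ℤ`-graded commutative ring (one containing an
invertible homogeneous element of positive degree) is good: every homogeneous prime `p`
satisfies `p_d = A_d ↔ p_{-d} = A_{-d}` for all `d`; equivalently, homogeneous primes are
determined by their degree-zero parts. -/
theorem stmt_3 {A : Type*} [CommRing A] (𝒜 : ℤ → AddSubgroup A) [GradedRing 𝒜]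
    (h : ∃ d : ℤ, 0 < d ∧ ∃ a ∈ 𝒜 d, IsUnit a) :
    (∀ p : Ideal A, p.IsPrime → p.IsHomogeneous 𝒜 →
      ∀ d : ℤ, ((∀ a ∈ 𝒜 d, a ∈ p) ↔ (∀ a ∈ 𝒜 (-d), a ∈ p))) ∧
    (∀ p q : Ideal A, p.IsPrime → q.IsPrime → p.IsHomogeneous 𝒜 → q.IsHomogeneous 𝒜 →
      (∀ a ∈ 𝒜 0, (a ∈ p ↔ a ∈ q)) → p = q) := by
  obtain ⟨e, he, a, ha, hu⟩ := h
  constructor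
  · intro p hp _ d
    constructor
    · exact aux_dir 𝒜 he ha hu p hp d
    · intro hd
      have := aux_dir 𝒜 he ha hu p hp (-d) hd
      simpa using this
  · intro p q hp hq hph hqh h0
    exact le_antisymm
      (aux_le 𝒜 he ha hu p q hp hq hph fun a ha' hap => (h0 a ha').1 hap)
      (aux_le 𝒜 he ha hu q p hq hp hqh fun a ha' haq => (h0 a ha').2 haq)
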